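/- Let F be any field and let T be the alternating trilinear form on V = F^{10} with trivector t = f_{1,7,10} + f_{2,8,10} + f_{3,9,10} + f_{4,8,9} + f_{5,7,9} + f_{6,7,8}. Then T is nondegenerate and the 6-dimensional subspace span{e₁,…,e₆} is totally T-singular. -/

import Mathlib

namespace Stmt16Aux

def dl (a b : ℕ) : ℤ := if a = b then 1 else 0

def tvTerm (p q r i j k : ℕ) : ℤ :=
  dl i p * dl j q * dl k r + dl i q * dl j r * dl k p + dl i r * dl j p * dl k q
  - dl i p * dl j r * dl k q - dl i q * dl j p * dl k r - dl i r * dl j q * dl k p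

def tv (i j k : ℕ) : ℤ :=
  tvTerm 0 6 9 i j k + tvTerm 1 7 9 i j k + tvTerm 2 8 9 i j k
  + tvTerm 3 7 8 i j k + tvTerm 4 6 8 i j k + tvTerm 5 6 7 i j k

lemma tv_swap01 (i j k : ℕ) : tv j i k = - tv i j k := by
  simp only [tv, tvTerm]; ring

lemma tv_swap12 (i j k : ℕ) : tv i k j = - tv i j k := by
  simp only [tv, tvTerm]; ring

lemma tv_swap02 (i j k : ℕ) : tv k j i = - tv i j k := by
  simp only [tv, tvTerm]; ring

lemma tv_diag01 (i k : ℕ) : tv i i k = 0 := by simp only [tv, tvTerm]; ring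
lemma tv_diag12 (i j : ℕ) : tv i j j = 0 := by simp only [tv, tvTerm]; ring
lemma tv_diag02 (i j : ℕ) : tv i j i = 0 := by simp only [tv, tvTerm]; ring

lemma tv_sorted : ∀ i j k : Fin 10, i < j → j < k →
    tv i j k = if ((i : ℕ), (j : ℕ), (k : ℕ)) ∈
      [((0:ℕ), (6:ℕ), (9:ℕ)), (1, 7, 9), (2, 8, 9),
        (3, 7, 8), (4, 6, 8), (5, 6, 7)] then 1 else 0 := by decide

lemma tv_low : ∀ i j : Fin 10, (i : ℕ) < 6 → (j : ℕ) < 6 → ∀ k : Fin 10,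
    tv i j k = 0 := by decide


lemma Fin10_sum {M : Type*} [AddCommMonoid M] (f : Fin 10 → M) :
    ∑ i, f i = f 0 + f 1 + f 2 + f 3 + f 4 + f 5 + f 6 + f 7 + f 8 + f 9 := by
  have h : ∑ i : Fin 10, f i = ∑ i : Fin 9, f i.castSucc + f (Fin.last 9) :=
    Fin.sum_univ_castSucc f
  rw [h, Fin.sum_univ_castSucc, Fin.sum_univ_eight]
  rfl

section
variable {F : Type*} [Field F] (T : AlternatingMap F (Fin 10 → F) F (Fin 3))

lemma Tswap01 (x y z : Fin 10 → F) : T ![y, x, z] = - T ![x, y, z] := by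
  have h := T.map_swap (v := ![x, y, z]) (i := 0) (j := 1) (by decide)
  have e : ![x, y, z] ∘ Equiv.swap (0 : Fin 3) 1 = ![y, x, z] := by
    funext t; fin_cases t <;> rfl
  rwa [e] at h

lemma Tswap12 (x y z : Fin 10 → F) : T ![x, z, y] = - T ![x, y, z] := by
  have h := T.map_swap (v := ![x, y, z]) (i := 1) (j := 2) (by decide)
  have e : ![x, y, z] ∘ Equiv.swap (1 : Fin 3) 2 = ![x, z, y] := by
    funext t; fin_cases t <;> rfl
  rwa [e] at h

lemma Tswap02 (x y z : Fin 10 → F) : T ![z, y, x] = - T ![x, y, z] := by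
  have h := T.map_swap (v := ![x, y, z]) (i := 0) (j := 2) (by decide)
  have e : ![x, y, z] ∘ Equiv.swap (0 : Fin 3) 2 = ![z, y, x] := by
    funext t; fin_cases t <;> rfl
  rwa [e] at h

lemma TaddL (a a' x y : Fin 10 → F) :
    T ![a + a', x, y] = T ![a, x, y] + T ![a', x, y] := by
  have h := T.map_update_add ![a, x, y] 0 a a'
  have e : ∀ b : Fin 10 → F, Function.update ![a, x, y] 0 b = ![b, x, y] := by
    intro b; funext t; fin_cases t <;> simp [Function.update]
  rw [e, e, e] at h; exact h

lemma TsmulL (c : F) (a x y : Fin 10 → F) :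
    T ![c • a, x, y] = c * T ![a, x, y] := by
  have h := T.map_update_smul ![a, x, y] 0 c a
  have e : ∀ b : Fin 10 → F, Function.update ![a, x, y] 0 b = ![b, x, y] := by
    intro b; funext t; fin_cases t <;> simp [Function.update]
  rw [e, e] at h; simpa using h

lemma TzeroL (x y : Fin 10 → F) : T ![(0 : Fin 10 → F), x, y] = 0 :=
  T.map_coord_zero (m := ![0, x, y]) 0 rfl

lemma TaddM (a b b' x : Fin 10 → F) :
    T ![a, b + b', x] = T ![a, b, x] + T ![a, b', x] := by
  have h1 := Tswap01 T (b + b') a x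
  have h2 := Tswap01 T b a x
  have h3 := Tswap01 T b' a x
  have h4 := TaddL T b b' a x
  -- h1 : T ![a, b+b', x] = - T ![b+b', a, x]
  rw [h1, h4]
  rw [← neg_eq_iff_eq_neg] at h2 h3
  rw [← h2, ← h3]; ring

lemma TsmulM (c : F) (a b x : Fin 10 → F) :
    T ![a, c • b, x] = c * T ![a, b, x] := by
  rw [Tswap01 T (c • b) a x, TsmulL, Tswap01 T b a x]; ring

lemma TzeroM (a x : Fin 10 → F) : T ![a, (0 : Fin 10 → F), x] = 0 := by
  rw [Tswap01 T 0 a x, TzeroL, neg_zero]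

lemma TsumL {s : Finset (Fin 10)} (g : Fin 10 → (Fin 10 → F)) (x y : Fin 10 → F) :
    T ![∑ i ∈ s, g i, x, y] = ∑ i ∈ s, T ![g i, x, y] := by
  classical
  induction s using Finset.induction with
  | empty => simpa using TzeroL T x y
  | insert _ _ h ih => rw [Finset.sum_insert h, TaddL, ih, Finset.sum_insert h]

lemma Texp1 (a x y : Fin 10 → F) :
    T ![a, x, y] = ∑ i, a i * T ![Pi.single i 1, x, y] := by
  conv_lhs => rw [← Finset.univ_sum_single a]
  rw [show (∑ i, Pi.single i (a i)) = ∑ i, a i • (Pi.single i 1 : Fin 10 → F) by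
    refine Finset.sum_congr rfl fun i _ => ?_
    funext t; simp [Pi.single_apply], TsumL]
  exact Finset.sum_congr rfl fun i _ => TsmulL T (a i) _ x y

lemma Texp3 (u v x : Fin 10 → F) :
    T ![u, v, x] = ∑ k, x k * T ![u, v, Pi.single k 1] := by
  rw [Tswap02 T x v u, Texp1, ← Finset.sum_neg_distrib]
  refine Finset.sum_congr rfl fun k _ => ?_
  rw [Tswap02 T (Pi.single k 1) v u]; ring

variable (hT : ∀ i j k : Fin 10, i < j → j < k →
      T ![Pi.single i 1, Pi.single j 1, Pi.single k 1] =
        if ((i : ℕ), (j : ℕ), (k : ℕ)) ∈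
            [((0:ℕ), (6:ℕ), (9:ℕ)), (1, 7, 9), (2, 8, 9),
              (3, 7, 8), (4, 6, 8), (5, 6, 7)] then 1 else 0)
include hT

lemma Esorted (i j k : Fin 10) (h1 : i < j) (h2 : j < k) :
    T ![Pi.single i 1, Pi.single j 1, Pi.single k 1] = ((tv i j k : ℤ) : F) := by
  rw [hT i j k h1 h2, tv_sorted i j k h1 h2]
  split_ifs <;> norm_num

lemma Ebase (i j k : Fin 10) :
    T ![Pi.single i 1, Pi.single j 1, Pi.single k 1] = ((tv i j k : ℤ) : F) := by
  rcases lt_trichotomy i j with h1 | rfl | h1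
  · rcases lt_trichotomy j k with h2 | rfl | h2
    · exact Esorted T hT i j k h1 h2
    · rw [T.map_eq_zero_of_eq ![Pi.single i 1, Pi.single j 1, Pi.single j 1]
        (i := 1) (j := 2) rfl (by decide), tv_diag12]; norm_num
    · rcases lt_trichotomy i k with h3 | rfl | h3
      · -- i < k < j
        rw [Tswap12 T (Pi.single i 1) (Pi.single k 1) (Pi.single j 1),
          Esorted T hT i k j h3 h2, ← Int.cast_neg, ← tv_swap12]
      · rw [T.map_eq_zero_of_eq ![Pi.single i 1, Pi.single j 1, Pi.single i 1]
          (i := 0) (j := 2) rfl (by decide), tv_diag02]; norm_num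
      · -- k < i < j
        rw [Tswap12 T (Pi.single i 1) (Pi.single k 1) (Pi.single j 1),
          Tswap01 T (Pi.single k 1) (Pi.single i 1) (Pi.single j 1),
          Esorted T hT k i j h3 h1, neg_neg, show tv k i j = tv i j k by
            rw [tv_swap01, tv_swap12]; ring]
  · rw [T.map_eq_zero_of_eq ![Pi.single i 1, Pi.single i 1, Pi.single k 1]
      (i := 0) (j := 1) rfl (by decide), tv_diag01]; norm_num
  · rcases lt_trichotomy i k with h2 | rfl | h2
    · -- j < i < k
      rw [Tswap01 T (Pi.single j 1) (Pi.single i 1) (Pi.single k 1),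
        Esorted T hT j i k h1 h2, ← Int.cast_neg, ← tv_swap01]
    · rw [T.map_eq_zero_of_eq ![Pi.single i 1, Pi.single j 1, Pi.single i 1]
        (i := 0) (j := 2) rfl (by decide), tv_diag02]; norm_num
    · rcases lt_trichotomy j k with h3 | rfl | h3
      · -- j < k < i
        rw [Tswap01 T (Pi.single j 1) (Pi.single i 1) (Pi.single k 1),
          Tswap12 T (Pi.single j 1) (Pi.single k 1) (Pi.single i 1),
          Esorted T hT j k i h3 h2, neg_neg, show tv j k i = tv i j k by
            rw [tv_swap12, tv_swap01]; ring]
      · rw [T.map_eq_zero_of_eq ![Pi.single i 1, Pi.single j 1, Pi.single j 1]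
          (i := 1) (j := 2) rfl (by decide), tv_diag12]; norm_num
      · -- k < j < i
        rw [Tswap02 T (Pi.single k 1) (Pi.single j 1) (Pi.single i 1),
          Esorted T hT k j i h3 h1, ← Int.cast_neg, ← tv_swap02]

end

end Stmt16Aux

open Stmt16Aux in
set_option maxHeartbeats 2000000 in
/-- Over any field, the alternating trilinear form on `F¹⁰` with trivector
`t = f_{1,7,10} + f_{2,8,10} + f_{3,9,10} + f_{4,8,9} + f_{5,7,9} + f_{6,7,8}`
is nondegenerate, and the 6-space `span{e₁,…,e₆}` is totally singular.
(0-based indices.) -/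
theorem stmt_16 (F : Type*) [Field F]
    (T : AlternatingMap F (Fin 10 → F) F (Fin 3))
    (hT : ∀ i j k : Fin 10, i < j → j < k →
      T ![Pi.single i 1, Pi.single j 1, Pi.single k 1] =
        if ((i : ℕ), (j : ℕ), (k : ℕ)) ∈
            [((0:ℕ), (6:ℕ), (9:ℕ)), (1, 7, 9), (2, 8, 9),
              (3, 7, 8), (4, 6, 8), (5, 6, 7)] then 1 else 0) :
    (∀ a : Fin 10 → F, (∀ x y, T ![a, x, y] = 0) → a = 0) ∧
    (∀ a ∈ Submodule.span F {Pi.single (0 : Fin 10) (1 : F), Pi.single 1 1,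
        Pi.single 2 1, Pi.single 3 1, Pi.single 4 1, Pi.single 5 1},
      ∀ b ∈ Submodule.span F {Pi.single (0 : Fin 10) (1 : F), Pi.single 1 1,
        Pi.single 2 1, Pi.single 3 1, Pi.single 4 1, Pi.single 5 1},
        ∀ x, T ![a, b, x] = 0) := by
  constructor
  · intro a ha
    have key : ∀ j k : Fin 10, ∑ i, a i * ((tv i j k : ℤ) : F) = 0 := by
      intro j k
      have h := ha (Pi.single j 1) (Pi.single k 1)
      rw [Texp1] at h
      simpa only [Ebase T hT] using h
    funext i
    fin_cases i
    · have h := key 6 9; rw [Fin10_sum] at h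
      norm_num [tv, tvTerm, dl,
        show ((0:Fin 10):ℕ) = 0 from rfl, show ((1:Fin 10):ℕ) = 1 from rfl,
        show ((2:Fin 10):ℕ) = 2 from rfl, show ((3:Fin 10):ℕ) = 3 from rfl,
        show ((4:Fin 10):ℕ) = 4 from rfl, show ((5:Fin 10):ℕ) = 5 from rfl,
        show ((6:Fin 10):ℕ) = 6 from rfl, show ((7:Fin 10):ℕ) = 7 from rfl,
        show ((8:Fin 10):ℕ) = 8 from rfl, show ((9:Fin 10):ℕ) = 9 from rfl] at h; simpa using h
    · have h := key 7 9; rw [Fin10_sum] at h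
      norm_num [tv, tvTerm, dl,
        show ((0:Fin 10):ℕ) = 0 from rfl, show ((1:Fin 10):ℕ) = 1 from rfl,
        show ((2:Fin 10):ℕ) = 2 from rfl, show ((3:Fin 10):ℕ) = 3 from rfl,
        show ((4:Fin 10):ℕ) = 4 from rfl, show ((5:Fin 10):ℕ) = 5 from rfl,
        show ((6:Fin 10):ℕ) = 6 from rfl, show ((7:Fin 10):ℕ) = 7 from rfl,
        show ((8:Fin 10):ℕ) = 8 from rfl, show ((9:Fin 10):ℕ) = 9 from rfl] at h; simpa using h
    · have h := key 8 9; rw [Fin10_sum] at h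
      norm_num [tv, tvTerm, dl,
        show ((0:Fin 10):ℕ) = 0 from rfl, show ((1:Fin 10):ℕ) = 1 from rfl,
        show ((2:Fin 10):ℕ) = 2 from rfl, show ((3:Fin 10):ℕ) = 3 from rfl,
        show ((4:Fin 10):ℕ) = 4 from rfl, show ((5:Fin 10):ℕ) = 5 from rfl,
        show ((6:Fin 10):ℕ) = 6 from rfl, show ((7:Fin 10):ℕ) = 7 from rfl,
        show ((8:Fin 10):ℕ) = 8 from rfl, show ((9:Fin 10):ℕ) = 9 from rfl] at h; simpa using h
    · have h := key 7 8; rw [Fin10_sum] at h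
      norm_num [tv, tvTerm, dl,
        show ((0:Fin 10):ℕ) = 0 from rfl, show ((1:Fin 10):ℕ) = 1 from rfl,
        show ((2:Fin 10):ℕ) = 2 from rfl, show ((3:Fin 10):ℕ) = 3 from rfl,
        show ((4:Fin 10):ℕ) = 4 from rfl, show ((5:Fin 10):ℕ) = 5 from rfl,
        show ((6:Fin 10):ℕ) = 6 from rfl, show ((7:Fin 10):ℕ) = 7 from rfl,
        show ((8:Fin 10):ℕ) = 8 from rfl, show ((9:Fin 10):ℕ) = 9 from rfl] at h; simpa using h
    · have h := key 6 8; rw [Fin10_sum] at h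
      norm_num [tv, tvTerm, dl,
        show ((0:Fin 10):ℕ) = 0 from rfl, show ((1:Fin 10):ℕ) = 1 from rfl,
        show ((2:Fin 10):ℕ) = 2 from rfl, show ((3:Fin 10):ℕ) = 3 from rfl,
        show ((4:Fin 10):ℕ) = 4 from rfl, show ((5:Fin 10):ℕ) = 5 from rfl,
        show ((6:Fin 10):ℕ) = 6 from rfl, show ((7:Fin 10):ℕ) = 7 from rfl,
        show ((8:Fin 10):ℕ) = 8 from rfl, show ((9:Fin 10):ℕ) = 9 from rfl] at h; simpa using h
    · have h := key 6 7; rw [Fin10_sum] at h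
      norm_num [tv, tvTerm, dl,
        show ((0:Fin 10):ℕ) = 0 from rfl, show ((1:Fin 10):ℕ) = 1 from rfl,
        show ((2:Fin 10):ℕ) = 2 from rfl, show ((3:Fin 10):ℕ) = 3 from rfl,
        show ((4:Fin 10):ℕ) = 4 from rfl, show ((5:Fin 10):ℕ) = 5 from rfl,
        show ((6:Fin 10):ℕ) = 6 from rfl, show ((7:Fin 10):ℕ) = 7 from rfl,
        show ((8:Fin 10):ℕ) = 8 from rfl, show ((9:Fin 10):ℕ) = 9 from rfl] at h; simpa using h
    · have h := key 0 9; rw [Fin10_sum] at h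
      norm_num [tv, tvTerm, dl,
        show ((0:Fin 10):ℕ) = 0 from rfl, show ((1:Fin 10):ℕ) = 1 from rfl,
        show ((2:Fin 10):ℕ) = 2 from rfl, show ((3:Fin 10):ℕ) = 3 from rfl,
        show ((4:Fin 10):ℕ) = 4 from rfl, show ((5:Fin 10):ℕ) = 5 from rfl,
        show ((6:Fin 10):ℕ) = 6 from rfl, show ((7:Fin 10):ℕ) = 7 from rfl,
        show ((8:Fin 10):ℕ) = 8 from rfl, show ((9:Fin 10):ℕ) = 9 from rfl] at h; simpa using h
    · have h := key 1 9; rw [Fin10_sum] at h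
      norm_num [tv, tvTerm, dl,
        show ((0:Fin 10):ℕ) = 0 from rfl, show ((1:Fin 10):ℕ) = 1 from rfl,
        show ((2:Fin 10):ℕ) = 2 from rfl, show ((3:Fin 10):ℕ) = 3 from rfl,
        show ((4:Fin 10):ℕ) = 4 from rfl, show ((5:Fin 10):ℕ) = 5 from rfl,
        show ((6:Fin 10):ℕ) = 6 from rfl, show ((7:Fin 10):ℕ) = 7 from rfl,
        show ((8:Fin 10):ℕ) = 8 from rfl, show ((9:Fin 10):ℕ) = 9 from rfl] at h; simpa using h
    · have h := key 2 9; rw [Fin10_sum] at h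
      norm_num [tv, tvTerm, dl,
        show ((0:Fin 10):ℕ) = 0 from rfl, show ((1:Fin 10):ℕ) = 1 from rfl,
        show ((2:Fin 10):ℕ) = 2 from rfl, show ((3:Fin 10):ℕ) = 3 from rfl,
        show ((4:Fin 10):ℕ) = 4 from rfl, show ((5:Fin 10):ℕ) = 5 from rfl,
        show ((6:Fin 10):ℕ) = 6 from rfl, show ((7:Fin 10):ℕ) = 7 from rfl,
        show ((8:Fin 10):ℕ) = 8 from rfl, show ((9:Fin 10):ℕ) = 9 from rfl] at h; simpa using h
    · have h := key 0 6; rw [Fin10_sum] at h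
      norm_num [tv, tvTerm, dl,
        show ((0:Fin 10):ℕ) = 0 from rfl, show ((1:Fin 10):ℕ) = 1 from rfl,
        show ((2:Fin 10):ℕ) = 2 from rfl, show ((3:Fin 10):ℕ) = 3 from rfl,
        show ((4:Fin 10):ℕ) = 4 from rfl, show ((5:Fin 10):ℕ) = 5 from rfl,
        show ((6:Fin 10):ℕ) = 6 from rfl, show ((7:Fin 10):ℕ) = 7 from rfl,
        show ((8:Fin 10):ℕ) = 8 from rfl, show ((9:Fin 10):ℕ) = 9 from rfl] at h; simpa using h
  · intro a ha b hb
    have key2 : ∀ c d : Fin 10, (c : ℕ) < 6 → (d : ℕ) < 6 → ∀ x : Fin 10 → F,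
        T ![Pi.single c 1, Pi.single d 1, x] = 0 := by
      intro c d hc hd x
      rw [Texp3]
      simp only [Ebase T hT, tv_low c d hc hd, Int.cast_zero, mul_zero,
        Finset.sum_const_zero]
    refine Submodule.span_induction₂
      (p := fun a b _ _ => ∀ x, T ![a, b, x] = 0) ?_ ?_ ?_ ?_ ?_ ?_ ?_ ha hb
    · intro u v hu hv
      simp only [Set.mem_insert_iff, Set.mem_singleton_iff] at hu hv
      rcases hu with rfl | rfl | rfl | rfl | rfl | rfl <;>
        rcases hv with rfl | rfl | rfl | rfl | rfl | rfl <;>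
        · refine key2 _ _ ?_ ?_ <;> decide
    · intro y _ x; exact TzeroL T y x
    · intro y _ x; exact TzeroM T y x
    · intro u v w _ _ _ h1 h2 x; rw [TaddL, h1, h2, add_zero]
    · intro u v w _ _ _ h1 h2 x; rw [TaddM, h1, h2, add_zero]
    · intro r u v _ _ h1 x; rw [TsmulL, h1, mul_zero]
    · intro r u v _ _ h1 x; rw [TsmulM, h1, mul_zero]
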